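/- If a pair of words (Y_{v1}, Y_{v2}) from a list Y_1, …, Y_t of non-empty words overlap, with Y_{v1} = M·N and Y_{v2} = N·L where N and M·L are non-empty, then the parameter ω of the list obtained from Y_1, …, Y_t by removing Y_{v1} and Y_{v2}, appending M, N, L, removing empty words, and removing duplicates, is strictly less than the parameter ω of the original list. -/

import Mathlib

/-- Two words overlap if `X = M·N` and `Y = N·L` where `N` and `M·L` are non-empty. -/
def Overlap {α : Type*} (X Y : List α) : Prop :=
  ∃ M N L : List α, X = M ++ N ∧ Y = N ++ L ∧ N ≠ [] ∧ M ++ L ≠ []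

/-- The parameter ω of a list of words: the sum of (length − 1) over its members. -/
def omegaParam {α : Type*} (l : List (List α)) : ℕ :=
  (l.map (fun w => w.length - 1)).sum

lemma perm_cons_erase' {α : Type*} [BEq α] [LawfulBEq α] {a : α} {l : List α} (h : a ∈ l) :
    l.Perm (a :: l.erase a) := by
  induction l with
  | nil => cases h
  | cons b t ih =>
    by_cases hb : b = a
    · subst hb; simp
    · rw [List.erase_cons_tail (by simpa using hb)]
      have ht : a ∈ t := by
        rcases List.mem_cons.mp h with h' | h'
        · exact absurd h'.symm hb
        · exact h'
      exact ((ih ht).cons b).trans (List.Perm.swap a b _)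

lemma omegaParam_sublist {α : Type*} {l₁ l₂ : List (List α)} (h : l₁.Sublist l₂) :
    omegaParam l₁ ≤ omegaParam l₂ :=
  (h.map _).sum_le_sum (by simp)

/-- Makanin, Lemma 1: if a pair of words `(Y₁, Y₂)` from a list of non-empty words overlap,
with `Y₁ = M·N`, `Y₂ = N·L`, `N` and `M·L` non-empty, then removing `Y₁` and `Y₂` from the
list, appending `M, N, L`, removing empty words and removing duplicates strictly decreases
the parameter ω. -/
theorem stmt_2 {α : Type*} [DecidableEq α] (Y : List (List α))
    (hne : ∀ w ∈ Y, w ≠ []) (Y1 Y2 M N L : List α)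
    (h1 : Y1 ∈ Y) (h2 : Y2 ∈ Y.erase Y1)
    (hY1 : Y1 = M ++ N) (hY2 : Y2 = N ++ L) (hN : N ≠ []) (hML : M ++ L ≠ []) :
    omegaParam (((((Y.erase Y1).erase Y2) ++ [M, N, L]).filter (fun w => !w.isEmpty)).dedup)
      < omegaParam Y := by
  set A := (Y.erase Y1).erase Y2 with hA
  have hsub : (((A ++ [M, N, L]).filter (fun w => !w.isEmpty)).dedup).Sublist
      (A ++ [M, N, L]) :=
    (List.dedup_sublist _).trans List.filter_sublist
  have h0 : omegaParam (((A ++ [M, N, L]).filter (fun w => !w.isEmpty)).dedup)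
      ≤ omegaParam (A ++ [M, N, L]) := omegaParam_sublist hsub
  have hperm : Y.Perm (Y1 :: Y2 :: A) :=
    (perm_cons_erase' h1).trans ((perm_cons_erase' h2).cons Y1)
  have hsumY : omegaParam Y = (Y1.length - 1) + ((Y2.length - 1) + omegaParam A) := by
    have := (hperm.map (fun w => w.length - 1)).sum_eq
    simpa [omegaParam] using this
  have happ : omegaParam (A ++ [M, N, L]) =
      omegaParam A + ((M.length - 1) + ((N.length - 1) + (L.length - 1))) := by
    simp [omegaParam]
  have hl1 : Y1.length = M.length + N.length := by simp [hY1]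
  have hl2 : Y2.length = N.length + L.length := by simp [hY2]
  have hn : 1 ≤ N.length := List.length_pos_of_ne_nil hN
  have hml : 1 ≤ M.length + L.length := by
    have := List.length_pos_of_ne_nil hML
    rw [List.length_append] at this
    omega
  omega
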